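/- Let (𝒬_i), (a_i) be positive sequences. The inequality λ ∑_{i=1}^∞ 𝒬_i (h_i − i h_1)^2 ≤ ∑_{i=1}^∞ a_i 𝒬_i 𝒬_1 (h_{i+1} − h_i − h_1)^2 holds for all real sequences h if and only if the Hardy inequality λ ∑_{i=1}^∞ 𝒬_{i+1} (∑_{j=1}^i f_j)^2 ≤ ∑_{i=1}^∞ a_i 𝒬_i 𝒬_1^{-1}·𝒬_1^2 f_i^2, i.e. λ ∑_{i=1}^∞ μ_i (∑_{j=1}^i f_j)^2 ≤ 𝒬_1 ∑_{i=1}^∞ ν_i f_i^2 with μ_i = 𝒬_{i+1}, ν_i = a_i 𝒬_i, holds for all real sequences f. -/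

import Mathlib

lemma aux_shift (g : ℕ → ENNReal) : ∑' i, g i = g 0 + ∑' i, g (i + 1) :=
  tsum_eq_zero_add' ENNReal.summable

/-- Equivalence of the Becker–Döring form inequality with a discrete Hardy inequality:
`λ ∑ 𝒬_i (h_i − i h_1)² ≤ ∑ a_i 𝒬_i 𝒬_1 (h_{i+1} − h_i − h_1)²` for all sequences `h`
iff `λ ∑ μ_i (∑_{j=1}^i f_j)² ≤ 𝒬_1 ∑ ν_i f_i²` for all sequences `f`, where
`μ_i = 𝒬_{i+1}` and `ν_i = a_i 𝒬_i`.
Sequences are indexed by `ℕ`, with index `n` corresponding to the paper's `i = n+1`;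
sums are taken in `ℝ≥0∞`. -/
theorem stmt_14 (𝒬 a : ℕ → ℝ) (h𝒬 : ∀ i, 0 < 𝒬 i) (ha : ∀ i, 0 < a i)
    (lam : ℝ) (hlam : 0 ≤ lam) :
    (∀ h : ℕ → ℝ,
      ENNReal.ofReal lam *
          ∑' i : ℕ, ENNReal.ofReal (𝒬 (i + 1) * (h (i + 1) - ((i : ℝ) + 1) * h 1) ^ 2) ≤
        ∑' i : ℕ,
          ENNReal.ofReal (a (i + 1) * 𝒬 (i + 1) * 𝒬 1 * (h (i + 2) - h (i + 1) - h 1) ^ 2))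
    ↔
    (∀ f : ℕ → ℝ,
      ENNReal.ofReal lam *
          ∑' i : ℕ,
            ENNReal.ofReal (𝒬 (i + 2) * (∑ j ∈ Finset.range (i + 1), f (j + 1)) ^ 2) ≤
        ENNReal.ofReal (𝒬 1) *
          ∑' i : ℕ, ENNReal.ofReal (a (i + 1) * 𝒬 (i + 1) * f (i + 1) ^ 2)) := by
  have hRHS : ∀ g : ℕ → ℝ,
      ENNReal.ofReal (𝒬 1) * ∑' i : ℕ, ENNReal.ofReal (a (i + 1) * 𝒬 (i + 1) * g (i + 1) ^ 2)
        = ∑' i : ℕ, ENNReal.ofReal (a (i + 1) * 𝒬 (i + 1) * 𝒬 1 * g (i + 1) ^ 2) := by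
    intro g
    rw [← ENNReal.tsum_mul_left]
    refine tsum_congr fun i => ?_
    rw [← ENNReal.ofReal_mul (h𝒬 1).le]
    ring_nf
  constructor
  · intro H f
    set h : ℕ → ℝ := fun n => ∑ j ∈ Finset.range (n - 1), f (j + 1) with hh
    have h1 : h 1 = 0 := by simp [hh]
    have key := H h
    have hL : ∀ i : ℕ, h (i + 1) - ((i : ℝ) + 1) * h 1 = ∑ j ∈ Finset.range i, f (j + 1) := by
      intro i; simp [hh, h1]
    have hD : ∀ i : ℕ, h (i + 2) - h (i + 1) - h 1 = f (i + 1) := by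
      intro i; simp [hh, h1, Finset.sum_range_succ]
    rw [hRHS f]
    calc ENNReal.ofReal lam *
          ∑' i : ℕ, ENNReal.ofReal (𝒬 (i + 2) * (∑ j ∈ Finset.range (i + 1), f (j + 1)) ^ 2)
        = ENNReal.ofReal lam *
          ∑' i : ℕ, ENNReal.ofReal (𝒬 (i + 1) * (h (i + 1) - ((i : ℝ) + 1) * h 1) ^ 2) := by
          rw [aux_shift (fun i => ENNReal.ofReal (𝒬 (i + 1) * (h (i + 1) - ((i : ℝ) + 1) * h 1) ^ 2))]
          simp only [hL]
          simp [Nat.cast_add]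
      _ ≤ ∑' i : ℕ, ENNReal.ofReal (a (i + 1) * 𝒬 (i + 1) * 𝒬 1 * (h (i + 2) - h (i + 1) - h 1) ^ 2) := key
      _ = ∑' i : ℕ, ENNReal.ofReal (a (i + 1) * 𝒬 (i + 1) * 𝒬 1 * f (i + 1) ^ 2) := by
          simp only [hD]
  · intro H h
    have key := H (fun n => h (n + 1) - h n - h 1)
    rw [hRHS (fun n => h (n + 1) - h n - h 1)] at key
    have hS : ∀ i : ℕ, ∑ j ∈ Finset.range (i + 1), (h (j + 1 + 1) - h (j + 1) - h 1)
        = h (i + 2) - ((i : ℝ) + 2) * h 1 := by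
      intro i
      have := Finset.sum_range_sub (fun j => h (j + 1)) (i + 1)
      simp only [Finset.sum_sub_distrib, this, Finset.sum_const, Finset.card_range, nsmul_eq_mul]
      push_cast; ring
    calc ENNReal.ofReal lam *
          ∑' i : ℕ, ENNReal.ofReal (𝒬 (i + 1) * (h (i + 1) - ((i : ℝ) + 1) * h 1) ^ 2)
        = ENNReal.ofReal lam *
          ∑' i : ℕ, ENNReal.ofReal (𝒬 (i + 2) * (∑ j ∈ Finset.range (i + 1),
            (h (j + 1 + 1) - h (j + 1) - h 1)) ^ 2) := by
          rw [aux_shift (fun i => ENNReal.ofReal (𝒬 (i + 1) * (h (i + 1) - ((i : ℝ) + 1) * h 1) ^ 2))]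
          simp only [hS]
          have he : ∀ i : ℕ, ENNReal.ofReal (𝒬 (i + 1 + 1) * (h (i + 1 + 1) - ((i : ℝ) + 1 + 1) * h 1) ^ 2)
              = ENNReal.ofReal (𝒬 (i + 2) * (h (i + 2) - ((i : ℝ) + 2) * h 1) ^ 2) := fun i => by
            rw [show ((i : ℝ) + 1 + 1) = (i : ℝ) + 2 by ring]
          simp only [Nat.cast_add, Nat.cast_one]
          simp only [he]
          norm_num
      _ ≤ _ := key
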